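/- (Peak Lemma) Let H be a mesh in which every axis size is a prime number, and let σ_0 →^{allGather(i)} σ_1 →^{dynSlice(j,x)} σ_2 be a two-step sequence of collective operations between well-formed distributed types over H. Then there exists a sequence of at most three collective operations from σ_0 to σ_2 whose height is at most max(localsize(σ_0), localsize(σ_2)). -/

import Mathlib

/-! ## Meshes, index tuples, distributed dimensions and types -/

structure Mesh where
  axes : Finset String
  size : String → ℕ
  size_pos : ∀ x ∈ axes, 1 ≤ size x

def Mesh.hasAxis (H : Mesh) (x : String) (n : ℕ) : Prop :=
  x ∈ H.axes ∧ H.size x = n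

abbrev IndexTuple (H : Mesh) : Type :=
  {ι : String → ℕ // ∀ x : String, (x ∈ H.axes → ι x < H.size x) ∧ (x ∉ H.axes → ι x = 0)}

structure Dim where
  tile : ℕ
  axes : List String
  global : ℕ
deriving DecidableEq

abbrev DType := List Dim

def Mesh.WFDim (H : Mesh) (d : Dim) : Prop :=
  1 ≤ d.tile ∧ d.axes.Nodup ∧ (∀ x ∈ d.axes, x ∈ H.axes) ∧
    d.tile * (d.axes.map H.size).prod = d.global

def Mesh.WFType (H : Mesh) (τ : DType) : Prop :=
  (∀ d ∈ τ, H.WFDim d) ∧ List.Pairwise (fun d e => ∀ x ∈ d.axes, x ∉ e.axes) τ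

def globaltype (τ : DType) : List ℕ := τ.map Dim.global
def localtype (τ : DType) : List ℕ := τ.map Dim.tile
def localsize (τ : DType) : ℕ := (τ.map Dim.tile).prod

def typeAxes : DType → List String
  | [] => []
  | d :: τ => d.axes ++ typeAxes τ

/-- Base offset map of a distributed dimension, `⟦c{xs}n⟧_D`. -/
def dimOffset (H : Mesh) : ℕ → List String → (String → ℕ) → ℕ
  | _, [], _ => 0
  | c, x :: xs, ι => c * ι x + dimOffset H (c * H.size x) xs ι

abbrev BOM (H : Mesh) : Type := IndexTuple H → List ℕ

/-- Base offset map of a distributed type, `⟦τ⟧_T`. -/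
def typeOffset (H : Mesh) (τ : DType) : BOM H :=
  fun ι => τ.map (fun d => dimOffset H d.tile d.axes ι.val)

/-! ## Collective operations (high-level typing rules) -/

inductive Label where
  | allGather (i : ℕ)
  | dynSlice (i : ℕ) (x : String)
  | allToAll (i j : ℕ)
  | allPermute
deriving DecidableEq

inductive OpKind where
  | gather | slice | toAll | permute
deriving DecidableEq

def Label.kind : Label → OpKind
  | .allGather _ => .gather
  | .dynSlice _ _ => .slice
  | .allToAll _ _ => .toAll
  | .allPermute => .permute

inductive Step (H : Mesh) : Label → DType → DType → Prop where
  | allGather {τ : DType} (i : ℕ) {c : ℕ} {x : String} {xs : List String} {s n : ℕ}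
      (hwf : H.WFType τ) (hx : H.hasAxis x n)
      (hi : τ[i]? = some ⟨c, x :: xs, s⟩) :
      Step H (.allGather i) τ (τ.set i ⟨c * n, xs, s⟩)
  | dynSlice {τ : DType} (i : ℕ) (x : String) {c : ℕ} {xs : List String} {s n : ℕ}
      (hwf : H.WFType τ) (hx : H.hasAxis x n) (hfresh : x ∉ typeAxes τ)
      (hi : τ[i]? = some ⟨c * n, xs, s⟩) :
      Step H (.dynSlice i x) τ (τ.set i ⟨c, x :: xs, s⟩)
  | allToAll {τ : DType} (i j : ℕ) {ci : ℕ} {x : String} {xsi : List String} {si cj : ℕ}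
      {xsj : List String} {sj n : ℕ}
      (hwf : H.WFType τ) (hij : i ≠ j) (hx : H.hasAxis x n)
      (hi : τ[i]? = some ⟨ci, x :: xsi, si⟩)
      (hj : τ[j]? = some ⟨cj, xsj, sj⟩)
      (hdvd : n ∣ cj) :
      Step H (.allToAll i j) τ ((τ.set i ⟨ci * n, xsi, si⟩).set j ⟨cj / n, x :: xsj, sj⟩)
  | allPermute {τ₁ τ₂ : DType}
      (hwf1 : H.WFType τ₁) (hwf2 : H.WFType τ₂)
      (hl : localtype τ₁ = localtype τ₂) (hg : globaltype τ₁ = globaltype τ₂) :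
      Step H .allPermute τ₁ τ₂

/-! ## Sequences of collective operations -/

inductive CSeq (H : Mesh) : DType → DType → Type where
  | nil (τ : DType) : CSeq H τ τ
  | cons {τ₁ τ₂ τ₃ : DType} (p : Label) (h : Step H p τ₁ τ₂) (s : CSeq H τ₂ τ₃) : CSeq H τ₁ τ₃

def CSeq.labels {H : Mesh} : {τ₁ τ₂ : DType} → CSeq H τ₁ τ₂ → List Label
  | _, _, .nil _ => []
  | _, _, .cons p _ s => p :: s.labels

def CSeq.typesList {H : Mesh} : {τ₁ τ₂ : DType} → CSeq H τ₁ τ₂ → List DType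
  | _, _, .nil τ => [τ]
  | τ, _, .cons _ _ s => τ :: s.typesList

/-- The height 𝔥 of a sequence: the maximum `localsize` over all types in it. -/
def CSeq.height {H : Mesh} {τ₁ τ₂ : DType} (s : CSeq H τ₁ τ₂) : ℕ :=
  (s.typesList.map localsize).foldr max 0

/-- Cost of a single step with source `σ₁` and target `σ₂`. -/
def stepCost (p : Label) (σ₁ σ₂ : DType) : ℕ :=
  match p with
  | .allGather _ => localsize σ₂
  | .dynSlice _ _ => 0
  | .allToAll _ _ => localsize σ₁
  | .allPermute => localsize σ₁

def CSeq.cost {H : Mesh} : {τ₁ τ₂ : DType} → CSeq H τ₁ τ₂ → ℕ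
  | _, _, .nil _ => 0
  | _, _, @CSeq.cons _ σ₁ σ₂ _ p _ s => stepCost p σ₁ σ₂ + s.cost

/-- Normal form: labels matched by `dynSlice* {allToAll | allPermute}* allGather*`. -/
def NormalFormK (ks : List OpKind) : Prop :=
  ∃ a b c : List OpKind, ks = a ++ b ++ c ∧
    (∀ k ∈ a, k = OpKind.slice) ∧
    (∀ k ∈ b, k = OpKind.toAll ∨ k = OpKind.permute) ∧
    (∀ k ∈ c, k = OpKind.gather)

/-! ## Weak collectives -/

/-- Equivalence of base offset maps. -/
def bomEquiv (H : Mesh) (β₁ β₂ : BOM H) : Prop :=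
  ∃ π : Equiv.Perm (IndexTuple H), β₂ = β₁ ∘ π

/-- The weak collective relation `⟦τ₁⟧_E ▶^p ⟦τ₂⟧_E`, represented on types. -/
def WeakStep (H : Mesh) (p : Label) (τ₁ τ₂ : DType) : Prop :=
  p ≠ Label.allPermute ∧ H.WFType τ₁ ∧ H.WFType τ₂ ∧
  ∃ σ₁ σ₂ : DType, Step H p σ₁ σ₂ ∧
    bomEquiv H (typeOffset H σ₁) (typeOffset H τ₁) ∧
    bomEquiv H (typeOffset H σ₂) (typeOffset H τ₂)

inductive WkSeq (H : Mesh) : DType → DType → Type where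
  | nil (τ : DType) : WkSeq H τ τ
  | cons {τ₁ τ₂ τ₃ : DType} (p : Label) (h : WeakStep H p τ₁ τ₂) (s : WkSeq H τ₂ τ₃) :
      WkSeq H τ₁ τ₃

def WkSeq.labels {H : Mesh} : {τ₁ τ₂ : DType} → WkSeq H τ₁ τ₂ → List Label
  | _, _, .nil _ => []
  | _, _, .cons p _ s => p :: s.labels

def WkSeq.typesList {H : Mesh} : {τ₁ τ₂ : DType} → WkSeq H τ₁ τ₂ → List DType
  | _, _, .nil τ => [τ]
  | τ, _, .cons _ _ s => τ :: s.typesList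

def WkSeq.height {H : Mesh} {τ₁ τ₂ : DType} (s : WkSeq H τ₁ τ₂) : ℕ :=
  (s.typesList.map localsize).foldr max 0

def WkSeq.cost {H : Mesh} : {τ₁ τ₂ : DType} → WkSeq H τ₁ τ₂ → ℕ
  | _, _, .nil _ => 0
  | _, _, @WkSeq.cons _ σ₁ σ₂ _ p _ s => stepCost p σ₁ σ₂ + s.cost

/-! ## Low-level MPI-style collectives on device assignments -/

abbrev DevMap (H : Mesh) (D : Type) := IndexTuple H ≃ D

structure DevAssign (H : Mesh) (D : Type) where
  dmap : DevMap H D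
  bom : BOM H

inductive LLabel where
  | allGather (x : String)
  | allToAll (x : String) (j : ℕ)
  | dynSlice (i : ℕ) (x : String)
  | allPermute
deriving DecidableEq

def LLabel.kind : LLabel → OpKind
  | .allGather _ => .gather
  | .allToAll _ _ => .toAll
  | .dynSlice _ _ => .slice
  | .allPermute => .permute

inductive LStep (H : Mesh) (D : Type) : LLabel → DevAssign H D → DevAssign H D → Type where
  | gather (τ : DType) (i : ℕ) (c : ℕ) (ys : List String) (x : String) (xs : List String)
      (s n : ℕ) (φ φ' : DevMap H D)
      (hwf : H.WFType τ) (hx : H.hasAxis x n)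
      (hi : τ[i]? = some ⟨c, ys ++ x :: xs, s⟩)
      (hmap : typeOffset H (τ.set i ⟨c, x :: (ys ++ xs), s⟩) ∘ ⇑φ'.symm
            = typeOffset H τ ∘ ⇑φ.symm) :
      LStep H D (.allGather x) ⟨φ, typeOffset H τ⟩
        ⟨φ', typeOffset H (τ.set i ⟨c * n, ys ++ xs, s⟩)⟩
  | toAll (τ : DType) (i j : ℕ) (ci : ℕ) (ys : List String) (x : String) (xs : List String)
      (si cj : ℕ) (xsj : List String) (sj n : ℕ) (φ φ' : DevMap H D)
      (hwf : H.WFType τ) (hij : i ≠ j) (hx : H.hasAxis x n)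
      (hi : τ[i]? = some ⟨ci, ys ++ x :: xs, si⟩)
      (hj : τ[j]? = some ⟨cj, xsj, sj⟩)
      (hdvd : n ∣ cj)
      (hmap : typeOffset H (τ.set i ⟨ci, x :: (ys ++ xs), si⟩) ∘ ⇑φ'.symm
            = typeOffset H τ ∘ ⇑φ.symm) :
      LStep H D (.allToAll x j) ⟨φ, typeOffset H τ⟩
        ⟨φ', typeOffset H ((τ.set i ⟨ci * n, ys ++ xs, si⟩).set j ⟨cj / n, x :: xsj, sj⟩)⟩
  | slice (τ : DType) (i : ℕ) (x : String) (c : ℕ) (xs : List String) (s n : ℕ)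
      (φ : DevMap H D)
      (hwf : H.WFType τ) (hx : H.hasAxis x n) (hfresh : x ∉ typeAxes τ)
      (hi : τ[i]? = some ⟨c * n, xs, s⟩) :
      LStep H D (.dynSlice i x) ⟨φ, typeOffset H τ⟩ ⟨φ, typeOffset H (τ.set i ⟨c, x :: xs, s⟩)⟩
  | permute (τ : DType) (ρ : Equiv.Perm (IndexTuple H)) (β' : BOM H)
      (φ φ' : DevMap H D) (π : Equiv.Perm D)
      (hwf : H.WFType τ)
      (hmap : β' ∘ ⇑φ'.symm = (typeOffset H τ ∘ ⇑ρ) ∘ ⇑φ.symm ∘ ⇑π) :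
      LStep H D .allPermute ⟨φ, typeOffset H τ ∘ ⇑ρ⟩ ⟨φ', β'⟩

def LStep.cost {H : Mesh} {D : Type} :
    {l : LLabel} → {a b : DevAssign H D} → LStep H D l a b → ℕ
  | _, _, _, .gather τ i c ys x xs s n .. => localsize (τ.set i ⟨c * n, ys ++ xs, s⟩)
  | _, _, _, .toAll τ .. => localsize τ
  | _, _, _, .slice .. => 0
  | _, _, _, .permute τ .. => localsize τ

inductive LoSeq (H : Mesh) (D : Type) : DevAssign H D → DevAssign H D → Type where
  | nil (a : DevAssign H D) : LoSeq H D a a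
  | cons {a b c : DevAssign H D} (l : LLabel) (st : LStep H D l a b) (s : LoSeq H D b c) :
      LoSeq H D a c

def LoSeq.labels {H : Mesh} {D : Type} : {a b : DevAssign H D} → LoSeq H D a b → List LLabel
  | _, _, .nil _ => []
  | _, _, .cons l _ s => l :: s.labels

def LoSeq.states {H : Mesh} {D : Type} : {a b : DevAssign H D} → LoSeq H D a b → List (DevAssign H D)
  | _, _, .nil a => [a]
  | a, _, .cons _ _ s => a :: s.states

def LoSeq.cost {H : Mesh} {D : Type} : {a b : DevAssign H D} → LoSeq H D a b → ℕ
  | _, _, .nil _ => 0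
  | _, _, .cons _ st s => st.cost + s.cost
/-! ## Auxiliary lemmas for the Peak Lemma -/

private lemma lset_self {α : Type*} {l : List α} {i : ℕ} {a : α} (h : l[i]? = some a) :
    l.set i a = l := by
  obtain ⟨hl, hget⟩ := List.getElem?_eq_some_iff.mp h
  apply List.ext_getElem?
  intro j
  rw [List.getElem?_set]
  split
  · next he => subst he; simp [hl, hget]
  · rfl

private lemma mem_typeAxes {τ : DType} {z : String} :
    z ∈ typeAxes τ ↔ ∃ d ∈ τ, z ∈ d.axes := by
  induction τ with
  | nil => simp [typeAxes]
  | cons d τ ih => simp [typeAxes, ih]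

private lemma localsize_set (τ : DType) (i : ℕ) {d : Dim} (d' : Dim) (h : τ[i]? = some d) :
    localsize (τ.set i d') * d.tile = localsize τ * d'.tile := by
  induction τ generalizing i with
  | nil => simp at h
  | cons e τ ih =>
    cases i with
    | zero =>
      simp only [List.getElem?_cons_zero, Option.some.injEq] at h
      subst h
      simp [localsize]; ring
    | succ i =>
      simp only [List.getElem?_cons_succ] at h
      have := ih i h
      simp only [List.set_cons_succ, localsize, List.map_cons, List.prod_cons] at *
      rw [Nat.mul_assoc, this, ← Nat.mul_assoc]

private lemma mem_set_self {α : Type*} {l : List α} {i : ℕ} (hl : i < l.length) (a : α) :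
    a ∈ l.set i a := by
  rw [List.mem_iff_getElem]
  exact ⟨i, by simpa using hl, by simp [List.getElem_set]⟩

private lemma mem_set_of_ne {α : Type*} {l : List α} {i k : ℕ} {d : α} (hk : l[k]? = some d)
    (hne : i ≠ k) (a : α) : d ∈ l.set i a := by
  obtain ⟨hkl, hget⟩ := List.getElem?_eq_some_iff.mp hk
  rw [List.mem_iff_getElem]
  exact ⟨k, by simpa using hkl, by simp [List.getElem_set, hne, hget]⟩

private lemma fresh_transfer {σ : DType} {i c c' : ℕ} {y : String} {ys : List String}
    {s s' : ℕ} {x : String}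
    (hi : σ[i]? = some ⟨c, y :: ys, s⟩)
    (hx : x ∉ typeAxes (σ.set i ⟨c', ys, s'⟩)) (hxy : x ≠ y) : x ∉ typeAxes σ := by
  obtain ⟨hlen, hget⟩ := List.getElem?_eq_some_iff.mp hi
  intro hmem
  rw [mem_typeAxes] at hmem
  obtain ⟨d, hd, hxd⟩ := hmem
  obtain ⟨k, hk, hdk⟩ := List.mem_iff_getElem.mp hd
  apply hx
  rw [mem_typeAxes]
  by_cases hki : k = i
  · subst hki
    have hdeq : d = ⟨c, y :: ys, s⟩ := hdk ▸ hget
    subst hdeq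
    have hxys : x ∈ ys := by
      rcases List.mem_cons.mp hxd with h | h
      · exact absurd h hxy
      · exact h
    exact ⟨⟨c', ys, s'⟩, mem_set_self hlen _, hxys⟩
  · refine ⟨d, mem_set_of_ne ?_ (fun h => hki h.symm) _, hxd⟩
    rw [List.getElem?_eq_getElem hk, hdk]

private lemma WFType_set {H : Mesh} {τ : DType} {i : ℕ} {d d' : Dim}
    (hwf : H.WFType τ) (hi : τ[i]? = some d) (hd' : H.WFDim d')
    (hax : ∀ z ∈ d'.axes, z ∈ d.axes ∨ z ∉ typeAxes τ) :
    H.WFType (τ.set i d') := by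
  obtain ⟨hlen, hget⟩ := List.getElem?_eq_some_iff.mp hi
  constructor
  · intro e he
    rcases List.mem_or_eq_of_mem_set he with h | h
    · exact hwf.1 e h
    · subst h; exact hd'
  · have hp := List.pairwise_iff_getElem.mp hwf.2
    rw [List.pairwise_iff_getElem]
    intro k l hk hl hkl
    simp only [List.length_set] at hk hl
    rw [List.getElem_set, List.getElem_set]
    by_cases hik : i = k
    · subst hik
      have hil : ¬ (i = l) := by omega
      simp only [if_pos rfl, if_neg hil]
      intro z hz
      rcases hax z hz with h | h
      · have := hp i l hk hl hkl
        rw [hget] at this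
        exact this z h
      · intro hc
        exact h (mem_typeAxes.mpr ⟨τ[l], List.getElem_mem hl, hc⟩)
    · by_cases hil : i = l
      · subst hil
        simp only [if_neg hik, if_pos rfl]
        intro z hz hzd'
        rcases hax z hzd' with h | h
        · have := hp k i hk hl hkl
          rw [hget] at this
          exact this z hz h
        · exact h (mem_typeAxes.mpr ⟨τ[k], List.getElem_mem hk, hz⟩)
      · simp only [if_neg hik, if_neg hil]
        exact hp k l hk hl hkl

private lemma localtype_getElem? {τ : DType} {i : ℕ} {d : Dim} (h : τ[i]? = some d) :
    (localtype τ)[i]? = some d.tile := by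
  simp [localtype, List.getElem?_map, h]

private lemma mem_of_getElem?' {α : Type*} {l : List α} {i : ℕ} {a : α}
    (h : l[i]? = some a) : a ∈ l := by
  obtain ⟨hl, hg⟩ := List.getElem?_eq_some_iff.mp h
  exact hg ▸ List.getElem_mem hl

/-- Peak Lemma. -/
theorem stmt2 (H : Mesh) (hP : ∀ x ∈ H.axes, (H.size x).Prime)
    (σ₀ σ₁ σ₂ : DType) (i j : ℕ) (x : String)
    (h1 : Step H (.allGather i) σ₀ σ₁) (h2 : Step H (.dynSlice j x) σ₁ σ₂) :
    ∃ s : CSeq H σ₀ σ₂,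
      s.labels.length ≤ 3 ∧ s.height ≤ max (localsize σ₀) (localsize σ₂) := by
  classical
  cases h1
  rename_i c y ys s n hy hwf0 hiy
  cases h2
  rename_i c2 zs s2 m hx2 hwf1 hiz hfresh
  -- hy : H.hasAxis y n, hwf0 : H.WFType σ₀, hiy : σ₀[i]? = some ⟨c, y::ys, s⟩
  -- hx2 : H.hasAxis x m, hwf1 : WFType σ₁, hiz : σ₁[j]? = some ⟨c2*m, zs, s2⟩, hfresh : x ∉ typeAxes σ₁
  obtain ⟨hyax, hysz⟩ := hy
  obtain ⟨hxax, hxsz⟩ := hx2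
  have hnP : n.Prime := hysz ▸ hP y hyax
  have hmP : m.Prime := hxsz ▸ hP x hxax
  have hnpos : 0 < n := hnP.pos
  have hmpos : 0 < m := hmP.pos
  obtain ⟨hleni, hgeti⟩ := List.getElem?_eq_some_iff.mp hiy
  have hdimi : H.WFDim ⟨c, y :: ys, s⟩ := hwf0.1 _ (mem_of_getElem?' hiy)
  have hcpos : 0 < c := hdimi.1
  have hy' : H.hasAxis y n := ⟨hyax, hysz⟩
  have hx' : H.hasAxis x m := ⟨hxax, hxsz⟩
  by_cases hij : i = j
  · -- same dimension
    subst hij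
    rw [List.getElem?_set_self (by simpa using hleni)] at hiz
    simp only [Option.some.injEq, Dim.mk.injEq] at hiz
    obtain ⟨hcn, hzs, hs2⟩ := hiz
    subst hzs
    subst hs2
    by_cases hxy : x = y
    · -- x = y : empty sequence, σ₂ = σ₀
      subst hxy
      have hmn : m = n := by rw [← hxsz, ← hysz]
      subst hmn
      have hc2 : c2 = c := Nat.eq_of_mul_eq_mul_right hmpos hcn.symm
      subst hc2
      have hend : (List.set σ₀ i ⟨c2 * m, ys, s⟩).set i ⟨c2, x :: ys, s⟩ = σ₀ := by
        rw [List.set_set]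
        exact lset_self hiy
      rw [hend]
      exact ⟨CSeq.nil σ₀, by simp [CSeq.labels],
        by simp [CSeq.height, CSeq.typesList]⟩
    · -- x ≠ y, same dimension
      have hxfresh : x ∉ typeAxes σ₀ := fresh_transfer hiy hfresh hxy
      have hxys : x ∉ ys := fun hmem =>
        hxfresh (mem_typeAxes.mpr ⟨⟨c, y :: ys, s⟩, mem_of_getElem?' hiy,
          List.mem_cons_of_mem _ hmem⟩)
      have hyys : y ∉ ys := (List.nodup_cons.mp hdimi.2.1).1
      have hysnd : ys.Nodup := (List.nodup_cons.mp hdimi.2.1).2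
      have hprod : c * (H.size y * (ys.map H.size).prod) = s := by
        have := hdimi.2.2.2
        simpa using this
      by_cases hnm : n = m
      · -- n = m : single allPermute
        subst hnm
        have hc2 : c2 = c := Nat.eq_of_mul_eq_mul_right hnpos hcn.symm
        subst hc2
        have hd' : H.WFDim ⟨c2, x :: ys, s⟩ := by
          refine ⟨hdimi.1, List.nodup_cons.mpr ⟨hxys, hysnd⟩, ?_, ?_⟩
          · intro z hz
            rcases List.mem_cons.mp hz with h | h
            · exact h ▸ hxax
            · exact hdimi.2.2.1 z (List.mem_cons_of_mem _ h)
          · simpa [hxsz, ← hysz] using hprod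
        have hwf2 : H.WFType (σ₀.set i ⟨c2, x :: ys, s⟩) :=
          WFType_set hwf0 hiy hd' (by
            intro z hz
            rcases List.mem_cons.mp hz with h | h
            · exact Or.inr (h ▸ hxfresh)
            · exact Or.inl (List.mem_cons_of_mem _ h))
        have hl : localtype σ₀ = localtype (σ₀.set i ⟨c2, x :: ys, s⟩) := by
          show localtype σ₀ = List.map Dim.tile (σ₀.set i ⟨c2, x :: ys, s⟩)
          rw [List.map_set]
          exact (lset_self (localtype_getElem? hiy)).symm
        have hg : globaltype σ₀ = globaltype (σ₀.set i ⟨c2, x :: ys, s⟩) := by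
          show globaltype σ₀ = List.map Dim.global (σ₀.set i ⟨c2, x :: ys, s⟩)
          rw [List.map_set]
          have : (globaltype σ₀)[i]? = some s := by
            simp [globaltype, List.getElem?_map, hiy]
          exact (lset_self this).symm
        have hend : (List.set σ₀ i ⟨c2 * n, ys, s⟩).set i ⟨c2, x :: ys, s⟩
            = σ₀.set i ⟨c2, x :: ys, s⟩ := List.set_set _
        rw [hend]
        refine ⟨CSeq.cons _ (Step.allPermute hwf0 hwf2 hl hg) (CSeq.nil _),
          by simp [CSeq.labels], ?_⟩
        simp [CSeq.height, CSeq.typesList]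
      · -- n ≠ m : dynSlice, allPermute, allGather
        have hmdc : m ∣ c := by
          rcases (Nat.Prime.dvd_mul hmP).mp ⟨c2, by rw [hcn]; ring⟩ with h | h
          · exact h
          · exact absurd ((Nat.prime_dvd_prime_iff_eq hmP hnP).mp h).symm hnm
        obtain ⟨c₀, hc₀⟩ := hmdc
        subst hc₀
        have hc₀pos : 0 < c₀ := by
          refine Nat.pos_of_ne_zero ?_
          rintro rfl
          simp at hcpos
        have hc2 : c2 = c₀ * n := by
          have : (c₀ * n) * m = c2 * m := by rw [← hcn]; ring
          exact (Nat.eq_of_mul_eq_mul_right hmpos this).symm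
        subst hc2
        -- the three types
        have hiy' : σ₀[i]? = some ⟨c₀ * m, y :: ys, s⟩ := by
          rw [hiy]; congr 2; ring
        have hd1 : H.WFDim ⟨c₀, x :: y :: ys, s⟩ := by
          refine ⟨hc₀pos, ?_, ?_, ?_⟩
          · exact List.nodup_cons.mpr ⟨by simp [hxy, hxys], hdimi.2.1⟩
          · intro z hz
            rcases List.mem_cons.mp hz with h | h
            · exact h ▸ hxax
            · exact hdimi.2.2.1 z h
          · simp only [List.map_cons, List.prod_cons]
            rw [hxsz, ← hprod]; ring
        have hd2 : H.WFDim ⟨c₀, y :: x :: ys, s⟩ := by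
          refine ⟨hc₀pos, ?_, ?_, ?_⟩
          · refine List.nodup_cons.mpr ⟨?_, List.nodup_cons.mpr ⟨hxys, hysnd⟩⟩
            simp [Ne.symm hxy, hyys]
          · intro z hz
            rcases List.mem_cons.mp hz with h | h
            · exact h ▸ hyax
            · rcases List.mem_cons.mp h with h' | h'
              · exact h' ▸ hxax
              · exact hdimi.2.2.1 z (List.mem_cons_of_mem _ h')
          · simp only [List.map_cons, List.prod_cons]
            rw [hxsz, ← hprod]; ring
        have hax1 : ∀ z ∈ (⟨c₀, x :: y :: ys, s⟩ : Dim).axes,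
            z ∈ (⟨m * c₀, y :: ys, s⟩ : Dim).axes ∨ z ∉ typeAxes σ₀ := by
          intro z hz
          rcases List.mem_cons.mp hz with h | h
          · exact Or.inr (h ▸ hxfresh)
          · exact Or.inl h
        have hax2 : ∀ z ∈ (⟨c₀, y :: x :: ys, s⟩ : Dim).axes,
            z ∈ (⟨m * c₀, y :: ys, s⟩ : Dim).axes ∨ z ∉ typeAxes σ₀ := by
          intro z hz
          rcases List.mem_cons.mp hz with h | h
          · exact Or.inl (h ▸ List.mem_cons_self)
          · rcases List.mem_cons.mp h with h' | h'
            · exact Or.inr (h' ▸ hxfresh)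
            · exact Or.inl (List.mem_cons_of_mem _ h')
        have hwfτ1 : H.WFType (σ₀.set i ⟨c₀, x :: y :: ys, s⟩) :=
          WFType_set hwf0 hiy hd1 hax1
        have hwfτ2 : H.WFType (σ₀.set i ⟨c₀, y :: x :: ys, s⟩) :=
          WFType_set hwf0 hiy hd2 hax2
        have step1 : Step H (.dynSlice i x) σ₀ (σ₀.set i ⟨c₀, x :: y :: ys, s⟩) :=
          Step.dynSlice i x hwf0 hx' hxfresh hiy'
        have hl12 : localtype (σ₀.set i ⟨c₀, x :: y :: ys, s⟩)
            = localtype (σ₀.set i ⟨c₀, y :: x :: ys, s⟩) := by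
          simp [localtype, List.map_set]
        have hg12 : globaltype (σ₀.set i ⟨c₀, x :: y :: ys, s⟩)
            = globaltype (σ₀.set i ⟨c₀, y :: x :: ys, s⟩) := by
          simp [globaltype, List.map_set]
        have step2 : Step H .allPermute (σ₀.set i ⟨c₀, x :: y :: ys, s⟩)
            (σ₀.set i ⟨c₀, y :: x :: ys, s⟩) :=
          Step.allPermute hwfτ1 hwfτ2 hl12 hg12
        have hiτ2 : (σ₀.set i ⟨c₀, y :: x :: ys, s⟩)[i]? = some ⟨c₀, y :: (x :: ys), s⟩ :=
          List.getElem?_set_self (by simpa using hleni)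
        have step3 : Step H (.allGather i) (σ₀.set i ⟨c₀, y :: x :: ys, s⟩)
            ((σ₀.set i ⟨c₀, y :: x :: ys, s⟩).set i ⟨c₀ * n, x :: ys, s⟩) :=
          Step.allGather i hwfτ2 hy' hiτ2
        have hend : (List.set σ₀ i ⟨m * c₀ * n, ys, s⟩).set i ⟨c₀ * n, x :: ys, s⟩
            = (σ₀.set i ⟨c₀, y :: x :: ys, s⟩).set i ⟨c₀ * n, x :: ys, s⟩ := by
          rw [List.set_set, List.set_set]
        rw [hend]
        refine ⟨CSeq.cons _ step1 (CSeq.cons _ step2 (CSeq.cons _ step3 (CSeq.nil _))),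
          by simp [CSeq.labels], ?_⟩
        have hls1 : localsize (σ₀.set i ⟨c₀, x :: y :: ys, s⟩) * m = localsize σ₀ := by
          have h := localsize_set σ₀ i ⟨c₀, x :: y :: ys, s⟩ hiy
          simp only at h
          apply Nat.eq_of_mul_eq_mul_right hc₀pos
          rw [← h]; ring
        have hls2 : localsize (σ₀.set i ⟨c₀, y :: x :: ys, s⟩) * m = localsize σ₀ := by
          have h := localsize_set σ₀ i ⟨c₀, y :: x :: ys, s⟩ hiy
          simp only at h
          apply Nat.eq_of_mul_eq_mul_right hc₀pos
          rw [← h]; ring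
        have h1le : localsize (σ₀.set i ⟨c₀, x :: y :: ys, s⟩) ≤ localsize σ₀ := by
          calc localsize (σ₀.set i ⟨c₀, x :: y :: ys, s⟩)
              ≤ localsize (σ₀.set i ⟨c₀, x :: y :: ys, s⟩) * m :=
                Nat.le_mul_of_pos_right _ hmpos
            _ = localsize σ₀ := hls1
        have h2le : localsize (σ₀.set i ⟨c₀, y :: x :: ys, s⟩) ≤ localsize σ₀ := by
          calc localsize (σ₀.set i ⟨c₀, y :: x :: ys, s⟩)
              ≤ localsize (σ₀.set i ⟨c₀, y :: x :: ys, s⟩) * m :=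
                Nat.le_mul_of_pos_right _ hmpos
            _ = localsize σ₀ := hls2
        simp only [CSeq.height, CSeq.typesList, List.map_cons, List.map_nil,
          List.foldr_cons, List.foldr_nil]
        omega
  · -- different dimensions
    have hiz0 : σ₀[j]? = some ⟨c2 * m, zs, s2⟩ := by
      rwa [List.getElem?_set_ne hij] at hiz
    have hdimj : H.WFDim ⟨c2 * m, zs, s2⟩ := hwf0.1 _ (mem_of_getElem?' hiz0)
    have hc2pos : 0 < c2 := by
      have hd1 : (1 : ℕ) ≤ c2 * m := hdimj.1
      refine Nat.pos_of_ne_zero ?_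
      rintro rfl
      simp at hd1
    by_cases hxy : x = y
    · -- x = y : single allToAll
      subst hxy
      have hmn : m = n := by rw [← hxsz, ← hysz]
      subst hmn
      have hdvd : m ∣ c2 * m := Dvd.intro_left c2 rfl
      have step := Step.allToAll i j hwf0 hij hy' hiy hiz0 hdvd
      have hdiv : c2 * m / m = c2 := Nat.mul_div_cancel c2 hmpos
      rw [hdiv] at step
      exact ⟨CSeq.cons _ step (CSeq.nil _), by simp [CSeq.labels],
        by simp [CSeq.height, CSeq.typesList]⟩
    · -- x ≠ y : dynSlice then allGather
      have hxfresh : x ∉ typeAxes σ₀ := fresh_transfer hiy hfresh hxy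
      have hxzs : x ∉ zs := fun hmem =>
        hxfresh (mem_typeAxes.mpr ⟨⟨c2 * m, zs, s2⟩, mem_of_getElem?' hiz0, hmem⟩)
      have hd' : H.WFDim ⟨c2, x :: zs, s2⟩ := by
        refine ⟨hc2pos, List.nodup_cons.mpr ⟨hxzs, hdimj.2.1⟩, ?_, ?_⟩
        · intro z hz
          rcases List.mem_cons.mp hz with h | h
          · exact h ▸ hxax
          · exact hdimj.2.2.1 z h
        · have hpj : (c2 * m) * (zs.map H.size).prod = s2 := hdimj.2.2.2
          simp only [List.map_cons, List.prod_cons]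
          rw [hxsz, ← hpj]; ring
      have hwfτ : H.WFType (σ₀.set j ⟨c2, x :: zs, s2⟩) :=
        WFType_set hwf0 hiz0 hd' (by
          intro z hz
          rcases List.mem_cons.mp hz with h | h
          · exact Or.inr (h ▸ hxfresh)
          · exact Or.inl h)
      have step1 : Step H (.dynSlice j x) σ₀ (σ₀.set j ⟨c2, x :: zs, s2⟩) :=
        Step.dynSlice j x hwf0 hx' hxfresh hiz0
      have hiτ : (σ₀.set j ⟨c2, x :: zs, s2⟩)[i]? = some ⟨c, y :: ys, s⟩ := by
        rw [List.getElem?_set_ne (Ne.symm hij)]; exact hiy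
      have step2 : Step H (.allGather i) (σ₀.set j ⟨c2, x :: zs, s2⟩)
          ((σ₀.set j ⟨c2, x :: zs, s2⟩).set i ⟨c * n, ys, s⟩) :=
        Step.allGather i hwfτ hy' hiτ
      have hend : (List.set σ₀ i ⟨c * n, ys, s⟩).set j ⟨c2, x :: zs, s2⟩
          = (σ₀.set j ⟨c2, x :: zs, s2⟩).set i ⟨c * n, ys, s⟩ :=
        List.set_comm _ _ hij
      rw [hend]
      refine ⟨CSeq.cons _ step1 (CSeq.cons _ step2 (CSeq.nil _)),
        by simp [CSeq.labels], ?_⟩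
      have hls : localsize (σ₀.set j ⟨c2, x :: zs, s2⟩) * m = localsize σ₀ := by
        have h := localsize_set σ₀ j ⟨c2, x :: zs, s2⟩ hiz0
        simp only at h
        apply Nat.eq_of_mul_eq_mul_right hc2pos
        rw [← h]; ring
      have hle : localsize (σ₀.set j ⟨c2, x :: zs, s2⟩) ≤ localsize σ₀ := by
        calc localsize (σ₀.set j ⟨c2, x :: zs, s2⟩)
            ≤ localsize (σ₀.set j ⟨c2, x :: zs, s2⟩) * m :=
              Nat.le_mul_of_pos_right _ hmpos
          _ = localsize σ₀ := hls
      simp only [CSeq.height, CSeq.typesList, List.map_cons, List.map_nil,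
        List.foldr_cons, List.foldr_nil]
      omega
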